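/- Let n ≥ 1 and let s be an n-bit string. Define ψ : ((Fin n → ZMod 2) × ZMod 2) → ℂ by ψ(a,b) = 2^{−n/2} if b = a·s and ψ(a,b) = 0 otherwise (the noiseless quantum sample state over all 2^n inputs). Then for every n-bit string 𝐤 and bit k*, the (n+1)-bit Walsh–Hadamard transform satisfies (W_{n+1} ψ)(𝐤, k*) = 1/√2 if 𝐤 = k*·s (componentwise scalar multiple in ZMod 2) and 0 otherwise. In particular, on the branch k* = 1 the transformed state is supported exactly on the secret string s. -/

import Mathlib

open scoped BigOperators

/-- `χ(x) = (-1)^x` for a bit `x ∈ ZMod 2`. -/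
noncomputable def chi (x : ZMod 2) : ℂ := (-1 : ℂ) ^ x.val

/-- The `(n+1)`-bit Walsh–Hadamard transform, where an `(n+1)`-bit string is
identified with a pair of an `n`-bit string and a bit, and the dot product of
`(a, b)` and `(𝐤, k⋆)` is `a·𝐤 + b·k⋆`. -/
noncomputable def WH (n : ℕ) (f : ((Fin n → ZMod 2) × ZMod 2) → ℂ)
    (k : (Fin n → ZMod 2) × ZMod 2) : ℂ :=
  ((Real.sqrt (2 ^ (n + 1)) : ℝ) : ℂ)⁻¹ *
    ∑ j : (Fin n → ZMod 2) × ZMod 2,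
      chi ((∑ i, j.1 i * k.1 i) + j.2 * k.2) * f j

noncomputable def chiChar : AddChar (ZMod 2) ℂ where
  toFun := chi
  map_zero_eq_one' := by simp [chi]
  map_add_eq_mul' := by
    intro x y
    show chi (x + y) = chi x * chi y
    rw [chi, chi, chi, ← pow_add, ZMod.val_add, ← neg_one_pow_eq_pow_mod_two]

/-- dot product with a fixed vector as an `AddMonoidHom`. -/
def dotHom (n : ℕ) (t : Fin n → ZMod 2) : (Fin n → ZMod 2) →+ ZMod 2 where
  toFun a := ∑ i, a i * t i
  map_zero' := by simp
  map_add' a b := by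
    simp [add_mul, Finset.sum_add_distrib]

lemma chi_dot_sum (n : ℕ) (t : Fin n → ZMod 2) :
    ∑ a : Fin n → ZMod 2, chi (∑ i, a i * t i) =
      if t = 0 then (2 : ℂ) ^ n else 0 := by
  classical
  have key : ∑ a : Fin n → ZMod 2, chi (∑ i, a i * t i)
      = ∑ a, (chiChar.compAddMonoidHom (dotHom n t)) a := by
    apply Finset.sum_congr rfl
    intro a _
    rfl
  rw [key, AddChar.sum_eq_ite]
  have hcard : (Fintype.card (Fin n → ZMod 2) : ℂ) = (2:ℂ) ^ n := by
    simp [Fintype.card_fun]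
  by_cases ht : t = 0
  · rw [if_pos ht]
    rw [if_pos, hcard]
    ext a
    simp [AddChar.compAddMonoidHom, dotHom, ht, chiChar, chi]
  · rw [if_neg ht]
    rw [if_neg]
    intro h0
    obtain ⟨i, hi⟩ := Function.ne_iff.mp ht
    have hone : ∀ x : ZMod 2, x ≠ 0 → x = 1 := by decide
    have hti : t i = 1 := hone _ (by simpa using hi)
    have := congrArg (fun ψ : AddChar _ ℂ => ψ (Pi.single i 1)) h0
    simp only [AddChar.zero_apply] at this
    have hval : (chiChar.compAddMonoidHom (dotHom n t)) (Pi.single i 1) = -1 := by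
      have hdot : (dotHom n t) (Pi.single i 1) = 1 := by
        simp only [dotHom, AddMonoidHom.coe_mk, ZeroHom.coe_mk]
        rw [Finset.sum_eq_single i]
        · simp [hti]
        · intro j _ hj; simp [Pi.single_eq_of_ne hj]
        · simp
      show chiChar ((dotHom n t) (Pi.single i 1)) = -1
      rw [hdot]
      show chi 1 = -1
      simp [chi, show ZMod.val (1:ZMod 2) = 1 from rfl]
    rw [hval] at this
    norm_num at this

theorem noiseless_sample_WH (n : ℕ) (hn : 1 ≤ n) (s : Fin n → ZMod 2)
    (ψ : ((Fin n → ZMod 2) × ZMod 2) → ℂ)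
    (hψ : ∀ a b, ψ (a, b) =
      if b = ∑ i, a i * s i then ((Real.sqrt (2 ^ n) : ℝ) : ℂ)⁻¹ else 0)
    (k : Fin n → ZMod 2) (kstar : ZMod 2) :
    WH n ψ (k, kstar) =
      if k = fun i => kstar * s i then ((Real.sqrt 2 : ℝ) : ℂ)⁻¹ else 0 := by
  classical
  unfold WH
  rw [Fintype.sum_prod_type]
  have step1 : ∀ a : Fin n → ZMod 2,
      ∑ b : ZMod 2, chi ((∑ i, a i * k i) + b * kstar) * ψ (a, b)
        = chi (∑ i, a i * (k i + kstar * s i)) * ((Real.sqrt (2 ^ n) : ℝ) : ℂ)⁻¹ := by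
    intro a
    rw [Finset.sum_eq_single (∑ i, a i * s i)]
    · rw [hψ, if_pos rfl]
      congr 2
      rw [Finset.sum_mul]
      rw [← Finset.sum_add_distrib]
      apply Finset.sum_congr rfl
      intro i _
      ring
    · intro b _ hb
      rw [hψ, if_neg hb, mul_zero]
    · simp
  simp_rw [step1]
  rw [← Finset.sum_mul, chi_dot_sum]
  have hiff : (fun i => k i + kstar * s i) = 0 ↔ k = fun i => kstar * s i := by
    constructor
    · intro h
      funext i
      have h1 : k i + kstar * s i = 0 := by simpa using congrFun h i
      have h2 : k i = - (kstar * s i) := eq_neg_of_add_eq_zero_left h1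
      simpa [CharTwo.neg_eq] using h2
    · intro h
      funext i
      rw [congrFun h i]
      simp [CharTwo.add_self_eq_zero]
  by_cases hk : k = fun i => kstar * s i
  · rw [if_pos (hiff.mpr hk), if_pos hk]
    have h2n : (0:ℝ) < 2 ^ n := by positivity
    have hsq : Real.sqrt (2 ^ n) * Real.sqrt (2 ^ n) = 2 ^ n :=
      Real.mul_self_sqrt (le_of_lt h2n)
    have hsplit : Real.sqrt (2 ^ (n+1)) = Real.sqrt (2 ^ n) * Real.sqrt 2 := by
      rw [pow_succ, Real.sqrt_mul (le_of_lt h2n)]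
    have hs2 : Real.sqrt 2 ≠ 0 := by positivity
    have hsn : Real.sqrt (2 ^ n) ≠ 0 := by positivity
    rw [hsplit]
    push_cast
    rw [mul_inv]
    field_simp
    norm_cast
    push_cast
    linear_combination (-1 : ℝ) * hsq
  · rw [if_neg (fun h => hk (hiff.mp h)), if_neg hk]
    ring
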